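/- arXiv:1909.00030 — 5 statements merged into one kernel-verified Lean document; each statement's English description precedes it below -/
import Mathlib

section
/- Let k < n be positive integers, and let G be a graph on n vertices containing no path with n - k edges. Then for every pair (a,b) of positive integers with a + b = k, there exist disjoint vertex sets A, B ⊆ V(G) with |A| = a and |B| = b such that there are no edges of G between A and B. -/
open SimpleGraph Finset

/-- `G` contains a path with exactly `n` edges. -/
def HasPathLen {V : Type*} (G : SimpleGraph V) (n : ℕ) : Prop :=
  ∃ (u v : V) (p : G.Walk u v), p.IsPath ∧ p.length = n

private lemma walk_of_chain' {V : Type*} {G : SimpleGraph V} :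
    ∀ (l : List V), l.Chain' G.Adj → l ≠ [] →
      ∃ (u v : V) (p : G.Walk u v), p.support = l := by
  intro l
  induction l with
  | nil => intro _ h; exact absurd rfl h
  | cons a t ih =>
    intro hc _
    cases t with
    | nil => exact ⟨a, a, SimpleGraph.Walk.nil, by simp⟩
    | cons b t' =>
      obtain ⟨hadj, hc'⟩ := List.isChain_cons_cons.mp hc
      obtain ⟨u, v, p, hp⟩ := ih hc' (by simp)
      have h2 := p.support_eq_cons
      rw [hp] at h2
      have hu : b = u := by injection h2
      subst hu
      exact ⟨a, v, SimpleGraph.Walk.cons hadj p, by simp [hp]⟩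

private lemma core {V : Type*} [Fintype V] [DecidableEq V] (G : SimpleGraph V) (m b : ℕ)
    (hm : ∀ l : List V, l.Chain' G.Adj → l.Nodup → l.length ≤ m)
    (hb : b ≤ Fintype.card V) :
    ∀ (fuel : ℕ) (B : Finset V) (P : List V),
      2 * (univ \ (B ∪ P.toFinset)).card + P.length ≤ fuel →
      Disjoint B P.toFinset → P.Chain' G.Adj → P.Nodup → B.card ≤ b →
      (∀ v ∈ B, ∀ u, G.Adj v u → u ∈ B ∪ P.toFinset) →
      ∃ B' X : Finset V, B'.card = b ∧ Disjoint B' X ∧ X.card ≤ m ∧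
        (∀ v ∈ B', ∀ u, G.Adj v u → u ∈ B' ∪ X) := by
  intro fuel
  induction fuel with
  | zero =>
    intro B P hfuel hdisj hchain hnodup hcard hN
    have hP : P = [] := List.length_eq_zero_iff.mp (by omega)
    subst hP
    have hc1 : (univ \ (B ∪ ([] : List V).toFinset)).card = Fintype.card V - B.card := by
      simp [Finset.card_sdiff_of_subset (Finset.subset_univ _), Finset.card_univ]
    have hBb : B.card = b := by omega
    refine ⟨B, ∅, hBb, Finset.disjoint_empty_right _, by simp, ?_⟩
    intro v hv u hadj
    simpa using hN v hv u hadj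
  | succ f ih =>
    intro B P hfuel hdisj hchain hnodup hcard hN
    by_cases hBb : B.card = b
    · exact ⟨B, P.toFinset, hBb, hdisj, le_trans (List.toFinset_card_le P) (hm P hchain hnodup), hN⟩
    have hlt : B.card < b := lt_of_le_of_ne hcard hBb
    cases P with
    | nil =>
      have hc1 : (univ \ (B ∪ ([] : List V).toFinset)).card = Fintype.card V - B.card := by
        simp [Finset.card_sdiff_of_subset (Finset.subset_univ _), Finset.card_univ]
      have hne : (univ \ (B ∪ ([] : List V).toFinset)).Nonempty := by
        rw [← Finset.card_pos, hc1]; omega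
      obtain ⟨w, hw⟩ := hne
      have hwB : w ∉ B := by
        rw [Finset.mem_sdiff] at hw
        simpa using hw.2
      have hset : B ∪ ([w] : List V).toFinset = insert w B := by
        ext x; simp [or_comm]
      apply ih B [w] ?_ ?_ (List.isChain_singleton _) (by simp) hcard ?_
      · rw [hset]
        have : (univ \ insert w B).card = Fintype.card V - (B.card + 1) := by
          rw [Finset.card_sdiff_of_subset (Finset.subset_univ _), Finset.card_univ,
            Finset.card_insert_of_notMem hwB]
        simp only [List.length_cons, List.length_nil]
        rw [this]
        simp only [List.toFinset_nil, Finset.union_empty, List.length_nil] at hfuel hc1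
        omega
      · simp [Finset.disjoint_singleton_right, hwB]
      · intro v hv u hadj
        have := hN v hv u hadj
        simp only [List.toFinset_nil, Finset.union_empty] at this
        simp [this]
    | cons w rest =>
      have hwB : w ∉ B := Finset.disjoint_right.mp hdisj (by simp)
      have hwrest : w ∉ rest := (List.nodup_cons.mp hnodup).1
      by_cases hpush : ∃ u, u ∉ B ∪ (w :: rest).toFinset ∧ G.Adj w u
      · obtain ⟨u, huout, hadj⟩ := hpush
        have huB : u ∉ B := fun h => huout (Finset.mem_union_left _ h)
        have huP : u ∉ (w :: rest) := fun h => huout (Finset.mem_union_right _ (List.mem_toFinset.mpr h))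
        have hset : B ∪ (u :: w :: rest).toFinset = insert u (B ∪ (w :: rest).toFinset) := by
          simp [List.toFinset_cons, Finset.union_insert]
        have hmemout : u ∈ univ \ (B ∪ (w :: rest).toFinset) := by
          rw [Finset.mem_sdiff]; exact ⟨Finset.mem_univ _, huout⟩
        apply ih B (u :: w :: rest) ?_ ?_ ?_ ?_ hcard ?_
        · rw [hset]
          have h1 : univ \ insert u (B ∪ (w :: rest).toFinset)
              = (univ \ (B ∪ (w :: rest).toFinset)).erase u := by
            ext x
            simp only [Finset.mem_sdiff, Finset.mem_erase, Finset.mem_insert, Finset.mem_univ,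
              true_and]
            tauto
          rw [h1, Finset.card_erase_of_mem hmemout]
          have hpos : 0 < (univ \ (B ∪ (w :: rest).toFinset)).card :=
            Finset.card_pos.mpr ⟨u, hmemout⟩
          simp only [List.length_cons] at hfuel ⊢
          omega
        · rw [List.toFinset_cons, Finset.disjoint_insert_right]
          exact ⟨huB, hdisj⟩
        · exact List.isChain_cons_cons.mpr ⟨hadj.symm, hchain⟩
        · exact List.nodup_cons.mpr ⟨huP, hnodup⟩
        · intro v hv x hadjx
          rw [hset]
          exact Finset.mem_insert_of_mem (hN v hv x hadjx)
      · push_neg at hpush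
        have hset : insert w B ∪ rest.toFinset = B ∪ (w :: rest).toFinset := by
          simp [List.toFinset_cons, Finset.insert_union, Finset.union_insert]
        apply ih (insert w B) rest ?_ ?_ ?_ (List.nodup_cons.mp hnodup).2 ?_ ?_
        · rw [hset]
          simp only [List.length_cons] at hfuel
          omega
        · rw [Finset.disjoint_insert_left]
          refine ⟨by simpa using hwrest, hdisj.mono_right ?_⟩
          rw [List.toFinset_cons]
          exact Finset.subset_insert _ _
        · exact hchain.tail
        · rw [Finset.card_insert_of_notMem hwB]; omega
        · intro v hv u hadj
          rw [hset]
          rcases Finset.mem_insert.mp hv with h | h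
          · subst h
            by_contra hout
            exact hpush u hout hadj
          · exact hN v h u hadj

theorem stmt_0 {V : Type*} [Fintype V] (G : SimpleGraph V) (n k : ℕ)
    (hk : 0 < k) (hkn : k < n) (hV : Fintype.card V = n)
    (hnopath : ¬ HasPathLen G (n - k)) :
    ∀ a b : ℕ, 0 < a → 0 < b → a + b = k →
      ∃ A B : Finset V, Disjoint A B ∧ A.card = a ∧ B.card = b ∧
        ∀ u ∈ A, ∀ v ∈ B, ¬ G.Adj u v := by
  classical
  intro a b ha hb hab
  set m := n - k with hmdef
  have hmV : ∀ l : List V, l.Chain' G.Adj → l.Nodup → l.length ≤ m := by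
    intro l hc hn
    by_contra hlen
    push_neg at hlen
    have h1 : (l.take (m+1)).length = m + 1 := by
      rw [List.length_take]; omega
    have hc' : (l.take (m+1)).Chain' G.Adj := hc.take _
    have hn' : (l.take (m+1)).Nodup := hn.sublist (List.take_sublist _ _)
    obtain ⟨u, v, p, hsupp⟩ := walk_of_chain' _ hc' (by
      intro h; rw [h] at h1; simp at h1)
    have hpath : p.IsPath := (SimpleGraph.Walk.isPath_def p).mpr (hsupp ▸ hn')
    have hlen' : p.length = m := by
      have := p.length_support
      rw [hsupp, h1] at this
      omega
    exact hnopath ⟨u, v, p, hpath, hlen'⟩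
  have hbV : b ≤ Fintype.card V := by omega
  obtain ⟨B', X, hcard, hdisj, hX, hN⟩ :=
    core G m b hmV hbV (2 * Fintype.card V) ∅ [] (by simp) (by simp) List.isChain_nil (by simp)
      (by simp) (by simp)
  have hA : a ≤ (univ \ (B' ∪ X)).card := by
    have h1 : (B' ∪ X).card ≤ b + m := le_trans (Finset.card_union_le _ _) (by omega)
    have h2 : (univ \ (B' ∪ X)).card = Fintype.card V - (B' ∪ X).card := by
      rw [Finset.card_sdiff_of_subset (Finset.subset_univ _), Finset.card_univ]
    omega
  obtain ⟨A, hAsub, hAcard⟩ := Finset.exists_subset_card_eq hA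
  refine ⟨A, B', ?_, hAcard, hcard, ?_⟩
  · rw [Finset.disjoint_left]
    intro x hx hxB
    have h2 := hAsub hx
    rw [Finset.mem_sdiff] at h2
    exact h2.2 (Finset.mem_union_left _ hxB)
  · intro u hu v hv hadj
    have h1 := hN v hv u hadj.symm
    have h2 := hAsub hu
    rw [Finset.mem_sdiff] at h2
    exact h2.2 h1
end

section
/- Let r ≥ 2 and t, n be positive integers, and let G be a graph on rn + (r+1)t vertices. Then for every red-blue colouring of the edges of G, either G contains a red path with n edges, or there exist r+1 pairwise disjoint vertex sets A_1, ..., A_{r+1}, each of size t, such that for each 1 ≤ i < j ≤ r+1 every edge of G between A_i and A_j is coloured blue. -/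
open SimpleGraph Finset

/-- The colouring `c` (with `true` = red) contains a red path with `n` edges in `G`. -/
def RedPathLen {V : Type*} (G : SimpleGraph V) (c : Sym2 V → Bool) (n : ℕ) : Prop :=
  ∃ (u v : V) (p : G.Walk u v), p.IsPath ∧ p.length = n ∧ ∀ e ∈ p.edges, c e = true

/-- DFS simulation lemma: given a finished set `F` and a red-path stack `p`,
we can complete the DFS to find a set `A` of size `t` with red edges only to
a leftover stack `S` of size at most `n`. -/
lemma lemB {V : Type*} [Fintype V] [DecidableEq V] (G : SimpleGraph V) (c : Sym2 V → Bool) (n t : ℕ)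
    (hn : 0 < n) (hnp : ¬ RedPathLen G c n) (U : Finset V) (htU : t ≤ U.card) :
    ∀ μ : ℕ, ∀ (F : Finset V) (v root : V) (p : G.Walk v root),
      p.IsPath → (∀ e ∈ p.edges, c e = true) → (∀ x ∈ p.support, x ∈ U) →
      (∀ x ∈ p.support, x ∉ F) → F ⊆ U → F.card ≤ t → p.length < n →
      (∀ u ∈ F, ∀ w ∈ U, w ∉ F → w ∉ p.support → G.Adj u w → c s(u, w) = false) →
      2 * (U \ (F ∪ p.support.toFinset)).card + p.support.toFinset.card ≤ μ →
      ∃ A S : Finset V, A ⊆ U ∧ S ⊆ U ∧ Disjoint A S ∧ A.card = t ∧ S.card ≤ n ∧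
        ∀ u ∈ A, ∀ w ∈ U, w ∉ A → w ∉ S → G.Adj u w → c s(u, w) = false := by
  classical
  intro μ
  induction μ with
  | zero =>
    intro F v root p hp hred hsupU hsupF hFU hFt hlen hinv hm
    exfalso
    have hv : v ∈ p.support.toFinset := List.mem_toFinset.mpr (Walk.start_mem_support _)
    have := Finset.card_pos.mpr ⟨v, hv⟩
    omega
  | succ μ ih =>
    intro F v root p hp hred hsupU hsupF hFU hFt hlen hinv hm
    by_cases hFt' : F.card = t
    · refine ⟨F, p.support.toFinset, hFU,
        fun x hx => hsupU x (List.mem_toFinset.mp hx),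
        Finset.disjoint_left.mpr (fun x hxF hxS => hsupF x (List.mem_toFinset.mp hxS) hxF),
        hFt', ?_, ?_⟩
      · rw [List.toFinset_card_of_nodup hp.support_nodup, Walk.length_support]
        omega
      · intro u hu w hw hwF hwS hadj
        exact hinv u hu w hw hwF (fun hws => hwS (List.mem_toFinset.mpr hws)) hadj
    · have hFlt : F.card < t := lt_of_le_of_ne hFt hFt'
      by_cases hex : ∃ w, w ∈ U ∧ w ∉ F ∧ w ∉ p.support ∧ G.Adj v w ∧ c s(v, w) = true
      · -- push a new vertex onto the stack
        obtain ⟨w, hwU, hwF, hws, hadj, hcred⟩ := hex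
        have hred' : ∀ e ∈ (Walk.cons hadj.symm p).edges, c e = true := by
          intro e he
          rw [Walk.edges_cons] at he
          rcases List.mem_cons.mp he with h' | h'
          · subst h'; rwa [Sym2.eq_swap]
          · exact hred e h'
        have hlen' : p.length + 1 < n := by
          rcases Nat.lt_or_ge (p.length + 1) n with h | h
          · exact h
          · exfalso
            apply hnp
            exact ⟨w, root, Walk.cons hadj.symm p, hp.cons hws,
              by rw [Walk.length_cons]; omega, hred'⟩
        refine ih F w root (Walk.cons hadj.symm p) (hp.cons hws) hred' ?_ ?_ hFU hFt
          (by rwa [Walk.length_cons]) ?_ ?_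
        · intro x hx
          rw [Walk.support_cons] at hx
          rcases List.mem_cons.mp hx with h' | h'
          · subst h'; exact hwU
          · exact hsupU x h'
        · intro x hx
          rw [Walk.support_cons] at hx
          rcases List.mem_cons.mp hx with h' | h'
          · subst h'; exact hwF
          · exact hsupF x h'
        · intro u hu w' hw' hw'F hw's hadj'
          refine hinv u hu w' hw' hw'F ?_ hadj'
          intro hws'
          exact hw's (by rw [Walk.support_cons]; exact List.mem_cons_of_mem _ hws')
        · have hSeq : (Walk.cons hadj.symm p).support.toFinset
              = insert w p.support.toFinset := by
            rw [Walk.support_cons, List.toFinset_cons]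
          have hwS : w ∉ p.support.toFinset := fun h => hws (List.mem_toFinset.mp h)
          have hcard : (insert w p.support.toFinset).card = p.support.toFinset.card + 1 :=
            Finset.card_insert_of_notMem hwS
          have hsub : U \ (F ∪ insert w p.support.toFinset) ⊆ U \ (F ∪ p.support.toFinset) := by
            apply Finset.sdiff_subset_sdiff (le_refl _)
            exact Finset.union_subset_union (le_refl _) (Finset.subset_insert _ _)
          have hmem : w ∈ U \ (F ∪ p.support.toFinset) := by
            simp only [Finset.mem_sdiff, Finset.mem_union]
            exact ⟨hwU, fun h => h.elim hwF hwS⟩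
          have hnmem : w ∉ U \ (F ∪ insert w p.support.toFinset) := by
            simp
          have hlt : (U \ (F ∪ insert w p.support.toFinset)).card
              < (U \ (F ∪ p.support.toFinset)).card :=
            Finset.card_lt_card ⟨hsub, fun h => hnmem (h hmem)⟩
          rw [hSeq, hcard]
          omega
      · -- no red neighbour: pop the top of the stack
        push_neg at hex
        simp only [Bool.not_eq_true] at hex
        cases p with
        | nil =>
          -- stack becomes empty: either finish, or restart at a fresh root
          have hvF : v ∉ F := hsupF v (Walk.start_mem_support _)
          have hvU : v ∈ U := hsupU v (Walk.start_mem_support _)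
          have hcardF' : (insert v F).card = F.card + 1 := Finset.card_insert_of_notMem hvF
          have hF'U : insert v F ⊆ U := Finset.insert_subset hvU hFU
          have hinv' : ∀ u ∈ insert v F, ∀ w ∈ U, w ∉ insert v F → G.Adj u w →
              c s(u, w) = false := by
            intro u hu w hw hwF' hadj
            have hwv : w ≠ v := fun h => hwF' (h ▸ Finset.mem_insert_self v F)
            have hwF : w ∉ F := fun h => hwF' (Finset.mem_insert_of_mem h)
            rcases Finset.mem_insert.mp hu with h' | h'
            · subst h'
              exact hex w hw hwF (by simp [hwv]) hadj
            · exact hinv u h' w hw hwF (by simp [hwv]) hadj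
          by_cases hdone : F.card + 1 = t
          · refine ⟨insert v F, ∅, hF'U, Finset.empty_subset _, Finset.disjoint_empty_right _,
              by omega, by simp, ?_⟩
            intro u hu w hw hwA _ hadj
            exact hinv' u hu w hw hwA hadj
          · have hlt' : (insert v F).card < t := by omega
            have hne : (U \ insert v F).Nonempty := by
              rw [← Finset.card_pos, Finset.card_sdiff_of_subset hF'U]
              omega
            obtain ⟨x, hx⟩ := hne
            have hxU : x ∈ U := (Finset.mem_sdiff.mp hx).1
            have hxF' : x ∉ insert v F := (Finset.mem_sdiff.mp hx).2
            refine ih (insert v F) x x Walk.nil Walk.IsPath.nil (by simp) ?_ ?_ hF'U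
              (by omega) (by simpa using hn) ?_ ?_
            · intro y hy
              rw [Walk.support_nil] at hy
              simp at hy; subst hy; exact hxU
            · intro y hy
              rw [Walk.support_nil] at hy
              simp at hy; subst hy; exact hxF'
            · intro u hu w hw hwF' hws hadj
              exact hinv' u hu w hw hwF' hadj
            · have hs1 : (Walk.nil : G.Walk x x).support.toFinset = {x} := by simp
              have hs0 : (Walk.nil : G.Walk v v).support.toFinset = {v} := by simp
              rw [hs1]
              rw [hs0] at hm
              have hsub : U \ (insert v F ∪ {x}) ⊆ U \ (F ∪ {v}) := by
                apply Finset.sdiff_subset_sdiff (le_refl _)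
                intro y hy
                simp only [Finset.mem_union, Finset.mem_insert, Finset.mem_singleton] at hy ⊢
                tauto
              have hmemx : x ∈ U \ (F ∪ {v}) := by
                simp only [Finset.mem_sdiff, Finset.mem_union, Finset.mem_singleton]
                refine ⟨hxU, ?_⟩
                rintro (h | h)
                · exact hxF' (Finset.mem_insert_of_mem h)
                · exact hxF' (h ▸ Finset.mem_insert_self v F)
              have hnmemx : x ∉ U \ (insert v F ∪ {x}) := by simp
              have hlt : (U \ (insert v F ∪ {x})).card < (U \ (F ∪ {v})).card :=
                Finset.card_lt_card ⟨hsub, fun h => hnmemx (h hmemx)⟩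
              simp only [Finset.card_singleton] at hm ⊢
              omega
        | cons hadjv q =>
          rename_i v₂
          rw [Walk.cons_isPath_iff] at hp
          obtain ⟨hq, hvq⟩ := hp
          have hvF : v ∉ F := hsupF v (Walk.start_mem_support _)
          have hvU : v ∈ U := hsupU v (Walk.start_mem_support _)
          have hcardF' : (insert v F).card = F.card + 1 := Finset.card_insert_of_notMem hvF
          have hF'U : insert v F ⊆ U := Finset.insert_subset hvU hFU
          have hsupmem : ∀ x ∈ q.support, x ∈ (Walk.cons hadjv q).support := by
            intro x hx
            rw [Walk.support_cons]
            exact List.mem_cons_of_mem _ hx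
          refine ih (insert v F) v₂ root q hq
            (fun e he => hred e (by rw [Walk.edges_cons]; exact List.mem_cons_of_mem _ he))
            (fun x hx => hsupU x (hsupmem x hx)) ?_ hF'U (by omega)
            (by rw [Walk.length_cons] at hlen; omega) ?_ ?_
          · intro x hx
            have hxv : x ≠ v := fun h => hvq (h ▸ hx)
            have := hsupF x (hsupmem x hx)
            simp [hxv, this]
          · intro u hu w hw hwF' hws hadj
            have hwv : w ≠ v := fun h => hwF' (h ▸ Finset.mem_insert_self v F)
            have hwF : w ∉ F := fun h => hwF' (Finset.mem_insert_of_mem h)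
            have hwsp : w ∉ (Walk.cons hadjv q).support := by
              rw [Walk.support_cons]
              simp [hwv, hws]
            rcases Finset.mem_insert.mp hu with h' | h'
            · subst h'
              exact hex w hw hwF hwsp hadj
            · exact hinv u h' w hw hwF hwsp hadj
          · have hvSq : v ∉ q.support.toFinset := fun h => hvq (List.mem_toFinset.mp h)
            have hSeq : (Walk.cons hadjv q).support.toFinset
                = insert v q.support.toFinset := by
              rw [Walk.support_cons, List.toFinset_cons]
            have hset : F ∪ insert v q.support.toFinset = insert v F ∪ q.support.toFinset := by
              ext y
              simp only [Finset.mem_union, Finset.mem_insert]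
              tauto
            have hcard : (insert v q.support.toFinset).card = q.support.toFinset.card + 1 :=
              Finset.card_insert_of_notMem hvSq
            rw [hSeq, hset, hcard] at hm
            omega

/-- One round: extract a set `A` of size `t` and a leftover `S` of size at most `n`
such that all red edges from `A` go into `S`. -/
lemma lemA {V : Type*} [Fintype V] [DecidableEq V] (G : SimpleGraph V) (c : Sym2 V → Bool) (n t : ℕ)
    (hn : 0 < n) (hnp : ¬ RedPathLen G c n) (U : Finset V) (htU : t ≤ U.card) :
    ∃ A S : Finset V, A ⊆ U ∧ S ⊆ U ∧ Disjoint A S ∧ A.card = t ∧ S.card ≤ n ∧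
      ∀ u ∈ A, ∀ w ∈ U, w ∉ A → w ∉ S → G.Adj u w → c s(u, w) = false := by
  classical
  rcases Nat.eq_zero_or_pos t with ht0 | htpos
  · subst ht0
    exact ⟨∅, ∅, Finset.empty_subset _, Finset.empty_subset _, Finset.disjoint_empty_right _,
      Finset.card_empty, by simp, by simp⟩
  · obtain ⟨x, hx⟩ := Finset.card_pos.mp (lt_of_lt_of_le htpos htU)
    refine lemB G c n t hn hnp U htU (2 * U.card + 1) ∅ x x Walk.nil Walk.IsPath.nil
      (by simp) ?_ (by simp) (Finset.empty_subset _) (by simp) (by simpa using hn)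
      (by simp) ?_
    · intro y hy
      rw [Walk.support_nil] at hy
      simp at hy; subst hy; exact hx
    · have h1 : (Walk.nil : G.Walk x x).support.toFinset = {x} := by simp
      rw [h1]
      have h2 : (U \ (∅ ∪ {x})).card ≤ U.card := Finset.card_le_card (Finset.sdiff_subset)
      simp only [Finset.card_singleton]
      omega

/-- Iterated extraction: `r' + 1` pairwise red-free sets of size `t` inside `U`. -/
lemma lemC {V : Type*} [Fintype V] [DecidableEq V] (G : SimpleGraph V) (c : Sym2 V → Bool) (n t : ℕ)
    (hn : 0 < n) (hnp : ¬ RedPathLen G c n) :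
    ∀ r' : ℕ, ∀ U : Finset V, (r' + 1) * t + r' * n ≤ U.card →
    ∃ A : Fin (r' + 1) → Finset V, (∀ i, A i ⊆ U) ∧
      (∀ i j, i ≠ j → Disjoint (A i) (A j)) ∧ (∀ i, (A i).card = t) ∧
      (∀ i j, i ≠ j → ∀ u ∈ A i, ∀ v ∈ A j, G.Adj u v → c s(u, v) = false) := by
  classical
  intro r'
  induction r' with
  | zero =>
    intro U hU
    obtain ⟨A0, hA0U, hA0card⟩ := Finset.exists_subset_card_eq (s := U) (n := t) (by omega)
    exact ⟨fun _ => A0, fun _ => hA0U, fun i j hij => absurd (by omega) hij,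
      fun _ => hA0card, fun i j hij => absurd (by omega) hij⟩
  | succ r' ih =>
    intro U hU
    have htU : t ≤ U.card := by
      have e1 : (r' + 1 + 1) * t = (r' + 1) * t + t := by ring
      omega
    obtain ⟨A0, S, hA0U, hSU, hdisj0, hA0card, hScard, hblue⟩ :=
      lemA G c n t hn hnp U htU
    set U' := U \ (A0 ∪ S) with hU'def
    have hU'card : (r' + 1) * t + r' * n ≤ U'.card := by
      have hsub : A0 ∪ S ⊆ U := Finset.union_subset hA0U hSU
      have h1 : U'.card = U.card - (A0 ∪ S).card := Finset.card_sdiff_of_subset hsub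
      have h2 : (A0 ∪ S).card ≤ A0.card + S.card := Finset.card_union_le _ _
      have e1 : (r' + 1 + 1) * t = (r' + 1) * t + t := by ring
      have e2 : (r' + 1) * n = r' * n + n := by ring
      omega
    obtain ⟨A', hA'U, hA'disj, hA'card, hA'blue⟩ := ih U' hU'card
    have hA'U'sub : ∀ j, A' j ⊆ U := fun j => (hA'U j).trans Finset.sdiff_subset
    have hA'notA0 : ∀ j, ∀ x ∈ A' j, x ∉ A0 ∧ x ∉ S := by
      intro j x hx
      have := Finset.mem_sdiff.mp (hA'U j hx)
      simp only [Finset.mem_union] at this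
      exact ⟨fun h => this.2 (Or.inl h), fun h => this.2 (Or.inr h)⟩
    refine ⟨Fin.cons A0 A', ?_, ?_, ?_, ?_⟩
    · intro i
      rcases Fin.eq_zero_or_eq_succ i with rfl | ⟨i', rfl⟩
      · simpa using hA0U
      · simpa using hA'U'sub i'
    · intro i j hij
      rcases Fin.eq_zero_or_eq_succ i with rfl | ⟨i', rfl⟩ <;>
        rcases Fin.eq_zero_or_eq_succ j with rfl | ⟨j', rfl⟩
      · exact absurd rfl hij
      · simp only [Fin.cons_zero, Fin.cons_succ]
        exact Finset.disjoint_left.mpr (fun x hxA0 hxA' => (hA'notA0 _ x hxA').1 hxA0)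
      · simp only [Fin.cons_zero, Fin.cons_succ]
        exact Finset.disjoint_right.mpr (fun x hxA0 hxA' => (hA'notA0 _ x hxA').1 hxA0)
      · simp only [Fin.cons_succ]
        exact hA'disj i' j' (fun h => hij (by rw [h]))
    · intro i
      rcases Fin.eq_zero_or_eq_succ i with rfl | ⟨i', rfl⟩
      · simpa using hA0card
      · simpa using hA'card i'
    · intro i j hij
      rcases Fin.eq_zero_or_eq_succ i with rfl | ⟨i', rfl⟩ <;>
        rcases Fin.eq_zero_or_eq_succ j with rfl | ⟨j', rfl⟩
      · exact absurd rfl hij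
      · simp only [Fin.cons_zero, Fin.cons_succ]
        intro u hu v hv hadj
        obtain ⟨hvA0, hvS⟩ := hA'notA0 _ v hv
        exact hblue u hu v (hA'U'sub _ hv) hvA0 hvS hadj
      · simp only [Fin.cons_zero, Fin.cons_succ]
        intro u hu v hv hadj
        obtain ⟨huA0, huS⟩ := hA'notA0 _ u hu
        rw [Sym2.eq_swap]
        exact hblue v hv u (hA'U'sub _ hu) huA0 huS hadj.symm
      · simp only [Fin.cons_succ]
        exact hA'blue i' j' (fun h => hij (by rw [h])) 

theorem stmt_1 {V : Type*} [Fintype V] (G : SimpleGraph V) (r n t : ℕ)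
    (hr : 2 ≤ r) (hn : 0 < n) (ht : 0 < t)
    (hV : Fintype.card V = r * n + (r + 1) * t)
    (c : Sym2 V → Bool) :
    RedPathLen G c n ∨
      ∃ A : Fin (r + 1) → Finset V,
        (∀ i j, i ≠ j → Disjoint (A i) (A j)) ∧
        (∀ i, (A i).card = t) ∧
        (∀ i j, i ≠ j → ∀ u ∈ A i, ∀ v ∈ A j, G.Adj u v → c s(u, v) = false) := by
  classical
  by_cases hred : RedPathLen G c n
  · exact Or.inl hred
  · right
    obtain ⟨A, _, hdisj, hcard, hblue⟩ := lemC G c n t hn hred r Finset.univ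
      (le_of_eq (by rw [Finset.card_univ, hV]; ring))
    exact ⟨A, hdisj, hcard, hblue⟩
end

section
/- Let r ≥ 2, let t, n be positive integers, let G be a graph on rn + (r+1)t vertices, and let c be a red-blue colouring of E(G) containing no red path with n edges. Then for each 1 ≤ s ≤ r there exist pairwise disjoint sets A_1, ..., A_{s+1} ⊆ V(G) with |A_1| = ... = |A_s| = t and |A_{s+1}| = (r - s)n + (r - s + 1)t, such that for all 1 ≤ i < j ≤ s+1, every edge of G between A_i and A_j is coloured blue. -/
open SimpleGraph Finset

section Aux

variable {V : Type*}

lemma walk_of_chain (G : SimpleGraph V) (c : Sym2 V → Bool) :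
    ∀ (l : List V) (a : V), List.Chain (fun x y => G.Adj x y ∧ c s(x, y) = true) a l →
    ∃ (z : V) (p : G.Walk a z), p.support = a :: l ∧ ∀ e ∈ p.edges, c e = true := by
  intro l
  induction l with
  | nil => exact fun a _ => ⟨a, .nil, rfl, by simp⟩
  | cons b l ih =>
    intro a h
    simp only [List.Chain, List.isChain_cons_cons] at h
    obtain ⟨z, q, hs, he⟩ := ih b h.2
    refine ⟨z, .cons h.1.1 q, by simp [hs], ?_⟩
    intro e he'
    rw [SimpleGraph.Walk.edges_cons, List.mem_cons] at he'
    rcases he' with h' | h'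
    · rw [h']; exact h.1.2
    · exact he e h'

lemma chain_take {R : V → V → Prop} :
    ∀ (l : List V) (a : V), List.Chain R a l → ∀ k, List.Chain R a (l.take k) := by
  intro l
  induction l with
  | nil => intro a _ k; simp; exact List.Chain.nil
  | cons b l ih =>
    intro a h k
    simp only [List.Chain, List.isChain_cons_cons] at h
    cases k with
    | zero => simp; exact List.Chain.nil
    | succ k =>
      simp only [List.take_succ_cons, List.Chain, List.isChain_cons_cons]
      exact ⟨h.1, ih b h.2 k⟩

lemma chain_short (G : SimpleGraph V) (c : Sym2 V → Bool) (n : ℕ)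
    (hc : ¬ RedPathLen G c n) (l : List V) (a : V)
    (h : List.Chain (fun x y => G.Adj x y ∧ c s(x, y) = true) a l)
    (hnd : (a :: l).Nodup) : l.length < n := by
  by_contra hlen
  push_neg at hlen
  obtain ⟨z, p, hs, he⟩ := walk_of_chain G c (l.take n) a (chain_take l a h n)
  apply hc
  refine ⟨a, z, p, ?_, ?_, he⟩
  · rw [SimpleGraph.Walk.isPath_def, hs]
    exact hnd.sublist (List.Sublist.cons₂ a (List.take_sublist n l))
  · have hlen2 := congrArg List.length hs
    rw [SimpleGraph.Walk.length_support] at hlen2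
    simp only [List.length_cons, List.length_take] at hlen2
    omega

lemma dfs [DecidableEq V] (G : SimpleGraph V) (c : Sym2 V → Bool) (n : ℕ)
    (hc : ¬ RedPathLen G c n) :
    ∀ (k : ℕ) (S W : Finset V) (st : List V), 2 * W.card + st.length ≤ k →
    Disjoint S W → (∀ x ∈ st, x ∉ S) → (∀ x ∈ st, x ∉ W) → st.Nodup →
    st.Chain' (fun x y => G.Adj x y ∧ c s(x, y) = true) →
    (∀ u ∈ S, ∀ w ∈ W, ¬(G.Adj u w ∧ c s(u, w) = true)) →
    ∀ t, S.card ≤ t → t ≤ S.card + st.length + W.card →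
    ∃ S' W' : Finset V, S ⊆ S' ∧ S' ⊆ S ∪ st.toFinset ∪ W ∧ W' ⊆ W ∧
      Disjoint S' W' ∧ S'.card = t ∧
      S.card + st.length + W.card ≤ t + n + W'.card ∧
      (∀ u ∈ S', ∀ w ∈ W', ¬(G.Adj u w ∧ c s(u, w) = true)) := by
  intro k
  induction k with
  | zero =>
    intro S W st hk _ _ _ _ _ hblue t ht1 ht2
    have hW : W.card = 0 := by omega
    have hst : st.length = 0 := by omega
    refine ⟨S, W, subset_rfl, by intro x hx; simp [Finset.mem_union]; tauto, subset_rfl,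
      ?_, by omega, by omega, hblue⟩
    · rw [Finset.card_eq_zero] at hW; simp [hW]
  | succ k ih =>
    intro S W st hk hSW hstS hstW hstnd hch hblue t ht1 ht2
    rcases eq_or_lt_of_le ht1 with heq | hlt
    · -- stop: S already has size t
      have hstlen : st.length ≤ n := by
        cases st with
        | nil => simp
        | cons a l =>
          have : l.length < n := by
            apply chain_short G c n hc l a hch
            exact hstnd
          simpa using this
      exact ⟨S, W, subset_rfl, by intro x hx; simp [Finset.mem_union]; tauto, subset_rfl,
        hSW, heq, by omega, hblue⟩
    · cases st with
      | nil =>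
        -- start a new component
        have hWpos : 0 < W.card := by simp at ht2; omega
        obtain ⟨w, hw⟩ := Finset.card_pos.mp hWpos
        have herase : (W.erase w).card = W.card - 1 := Finset.card_erase_of_mem hw
        have hrec := ih S (W.erase w) [w] (by simp only [List.length_cons, List.length_nil]; omega)
          (hSW.mono_right (Finset.erase_subset _ _))
          (by intro x hx; simp at hx; subst hx; exact Finset.disjoint_right.mp hSW hw)
          (by intro x hx; simp at hx; subst hx; simp)
          (by simp) (List.isChain_singleton w)
          (fun u hu v hv => hblue u hu v (Finset.erase_subset _ _ hv))
          t ht1 (by simp only [List.length_cons, List.length_nil, List.length_cons] at ht2 ⊢; omega)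
        obtain ⟨S', W', h1, h2, h3, h4, h5, h6, h7⟩ := hrec
        refine ⟨S', W', h1, ?_, h3.trans (Finset.erase_subset _ _), h4, h5, ?_, h7⟩
        · refine h2.trans ?_
          intro x hx
          simp only [Finset.mem_union, List.toFinset_cons, List.toFinset_nil,
            insert_empty_eq, Finset.mem_insert, Finset.mem_singleton,
            List.toFinset_nil, Finset.notMem_empty] at hx ⊢
          rcases hx with (h | rfl) | h
          · exact Or.inl (Or.inl h)
          · exact Or.inr hw
          · exact Or.inr (Finset.erase_subset _ _ h)
        · simp only [List.length_cons, List.length_nil] at h6 ⊢; omega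
      | cons v l =>
        by_cases hex : ∃ w ∈ W, G.Adj v w ∧ c s(v, w) = true
        · -- push
          obtain ⟨w, hwW, hadj⟩ := hex
          have hwv : (G.Adj w v ∧ c s(w, v) = true) :=
            ⟨hadj.1.symm, by rw [Sym2.eq_swap]; exact hadj.2⟩
          have herase : (W.erase w).card = W.card - 1 := Finset.card_erase_of_mem hwW
          have hWpos : 0 < W.card := Finset.card_pos.mpr ⟨w, hwW⟩
          have hrec := ih S (W.erase w) (w :: v :: l)
            (by simp only [List.length_cons] at hk ⊢; omega)
            (hSW.mono_right (Finset.erase_subset _ _))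
            (by
              intro x hx
              rcases List.mem_cons.mp hx with rfl | hx
              · exact Finset.disjoint_right.mp hSW hwW
              · exact hstS x hx)
            (by
              intro x hx
              rcases List.mem_cons.mp hx with rfl | hx
              · simp
              · exact fun hmem => hstW x hx (Finset.erase_subset _ _ hmem))
            (by
              refine List.nodup_cons.mpr ⟨?_, hstnd⟩
              intro hmem
              exact hstW w hmem hwW)
            (by simp only [List.Chain', List.isChain_cons_cons]; exact ⟨hwv, hch⟩)
            (fun u hu x hx => hblue u hu x (Finset.erase_subset _ _ hx))
            t ht1
            (by simp only [List.length_cons] at ht2 ⊢; omega)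
          obtain ⟨S', W', h1, h2, h3, h4, h5, h6, h7⟩ := hrec
          refine ⟨S', W', h1, ?_, h3.trans (Finset.erase_subset _ _), h4, h5, ?_, h7⟩
          · refine h2.trans ?_
            intro x hx
            simp only [Finset.mem_union, List.toFinset_cons, Finset.mem_insert,
              List.mem_toFinset] at hx ⊢
            rcases hx with (h | (rfl | h)) | h
            · exact Or.inl (Or.inl h)
            · exact Or.inr hwW
            · exact Or.inl (Or.inr h)
            · exact Or.inr (Finset.erase_subset _ _ h)
          · simp only [List.length_cons] at h6 ⊢; omega
        · -- pop
          push_neg at hex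
          have hvS : v ∉ S := hstS v (by simp)
          have hrec := ih (insert v S) W l
            (by simp only [List.length_cons] at hk ⊢; omega)
            (by
              rw [Finset.disjoint_left]
              intro x hx
              rcases Finset.mem_insert.mp hx with rfl | hx
              · exact fun hmem => hstW _ List.mem_cons_self hmem
              · exact Finset.disjoint_left.mp hSW hx)
            (by
              intro x hx hmem
              rcases Finset.mem_insert.mp hmem with rfl | hx'
              · exact (List.nodup_cons.mp hstnd).1 hx
              · exact hstS x (by simp [hx]) hx')
            (fun x hx => hstW x (by simp [hx]))
            (List.nodup_cons.mp hstnd).2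
            hch.tail
            (by
              intro u hu w hw
              rcases Finset.mem_insert.mp hu with rfl | hu
              · exact fun hcon => hex w hw hcon.1 hcon.2
              · exact hblue u hu w hw)
            t (by rw [Finset.card_insert_of_notMem hvS]; omega)
            (by rw [Finset.card_insert_of_notMem hvS]
                simp only [List.length_cons] at ht2 ⊢; omega)
          obtain ⟨S', W', h1, h2, h3, h4, h5, h6, h7⟩ := hrec
          refine ⟨S', W', (Finset.subset_insert v S).trans h1, ?_, h3, h4, h5, ?_, h7⟩
          · refine h2.trans ?_
            intro x hx
            simp only [Finset.mem_union, Finset.mem_insert, List.toFinset_cons,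
              List.mem_toFinset] at hx ⊢
            tauto
          · rw [Finset.card_insert_of_notMem hvS] at h6
            simp only [List.length_cons] at h6 ⊢; omega

lemma iterate_blue [DecidableEq V] (G : SimpleGraph V) (c : Sym2 V → Bool) (n t : ℕ)
    (hc : ¬ RedPathLen G c n) :
    ∀ (s : ℕ) (W : Finset V), s * (n + t) ≤ W.card →
    ∃ (A : Fin s → Finset V) (W' : Finset V),
      (∀ i, A i ⊆ W) ∧ W' ⊆ W ∧
      (∀ i j, i ≠ j → Disjoint (A i) (A j)) ∧
      (∀ i, Disjoint (A i) W') ∧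
      (∀ i, (A i).card = t) ∧
      W.card ≤ W'.card + s * (n + t) ∧
      (∀ i j, i ≠ j → ∀ u ∈ A i, ∀ v ∈ A j, ¬(G.Adj u v ∧ c s(u, v) = true)) ∧
      (∀ i, ∀ u ∈ A i, ∀ v ∈ W', ¬(G.Adj u v ∧ c s(u, v) = true)) := by
  intro s
  induction s with
  | zero =>
    intro W _
    exact ⟨fun i => i.elim0, W, fun i => i.elim0, subset_rfl, fun i => i.elim0,
      fun i => i.elim0, fun i => i.elim0, by simp, fun i => i.elim0, fun i => i.elim0⟩
  | succ s ih =>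
    intro W hW
    have hts : t ≤ W.card := by
      have : (n + t) ≤ (s + 1) * (n + t) := Nat.le_mul_of_pos_left _ (by omega)
      omega
    obtain ⟨S₁, W₁, _, hS₁sub, hW₁sub, hdisj₁, hScard, hbound₁, hblue₁⟩ :=
      dfs G c n hc (2 * W.card) ∅ W [] (by simp) (by simp) (by simp) (by simp) (by simp)
        List.isChain_nil (by simp) t (by simp) (by simpa using hts)
    simp only [Finset.card_empty, List.length_nil, zero_add] at hbound₁
    have hS₁W : S₁ ⊆ W := by
      refine hS₁sub.trans ?_
      simp
    have hW₁card : s * (n + t) ≤ W₁.card := by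
      rw [Nat.succ_mul] at hW; omega
    obtain ⟨A, W'', hAsub, hW''sub, hAdisj, hAW'', hAcard, hbound₂, hblueA, hblueW⟩ := ih W₁ hW₁card
    refine ⟨Fin.cases S₁ A, W'', ?_, hW''sub.trans hW₁sub, ?_, ?_, ?_, ?_, ?_, ?_⟩
    · intro i
      induction i using Fin.cases with
      | zero => simpa using hS₁W
      | succ i => simpa using (hAsub i).trans hW₁sub
    · intro i j hij
      induction i using Fin.cases with
      | zero =>
        induction j using Fin.cases with
        | zero => exact absurd rfl hij
        | succ j =>
          simp only [Fin.cases_zero, Fin.cases_succ]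
          exact hdisj₁.mono_right (hAsub j)
      | succ i =>
        induction j using Fin.cases with
        | zero =>
          simp only [Fin.cases_zero, Fin.cases_succ]
          exact (hdisj₁.mono_right (hAsub i)).symm
        | succ j =>
          simp only [Fin.cases_succ]
          exact hAdisj i j (fun h => hij (by rw [h]))
    · intro i
      induction i using Fin.cases with
      | zero => simpa using hdisj₁.mono_right hW''sub
      | succ i => simpa using hAW'' i
    · intro i
      induction i using Fin.cases with
      | zero => simpa using hScard
      | succ i => simpa using hAcard i
    · rw [Nat.succ_mul]; omega
    · intro i j hij
      induction i using Fin.cases with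
      | zero =>
        induction j using Fin.cases with
        | zero => exact absurd rfl hij
        | succ j =>
          simp only [Fin.cases_zero, Fin.cases_succ]
          exact fun u hu v hv => hblue₁ u hu v (hAsub j hv)
      | succ i =>
        induction j using Fin.cases with
        | zero =>
          simp only [Fin.cases_zero, Fin.cases_succ]
          intro u hu v hv hcon
          exact hblue₁ v hv u (hAsub i hu) ⟨hcon.1.symm, by rw [Sym2.eq_swap]; exact hcon.2⟩
        | succ j =>
          simp only [Fin.cases_succ]
          exact hblueA i j (fun h => hij (by rw [h]))
    · intro i
      induction i using Fin.cases with
      | zero =>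
        simp only [Fin.cases_zero]
        exact fun u hu v hv => hblue₁ u hu v (hW''sub hv)
      | succ i => simpa using hblueW i

end Aux

theorem stmt_2 {V : Type*} [Fintype V] (G : SimpleGraph V) (r n t : ℕ)
    (hr : 2 ≤ r) (hn : 0 < n) (ht : 0 < t)
    (hV : Fintype.card V = r * n + (r + 1) * t)
    (c : Sym2 V → Bool) (hc : ¬ RedPathLen G c n) :
    ∀ s : ℕ, 1 ≤ s → s ≤ r →
      ∃ A : Fin (s + 1) → Finset V,
        (∀ i j, i ≠ j → Disjoint (A i) (A j)) ∧
        (∀ i : Fin (s + 1), (i : ℕ) < s → (A i).card = t) ∧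
        (A (Fin.last s)).card = (r - s) * n + (r - s + 1) * t ∧
        (∀ i j, i ≠ j → ∀ u ∈ A i, ∀ v ∈ A j, G.Adj u v → c s(u, v) = false) := by
  classical
  intro s hs1 hsr
  obtain ⟨d, rfl⟩ : ∃ d, r = s + d := ⟨r - s, by omega⟩
  have hcard : (Finset.univ : Finset V).card = (s + d) * n + (s + d + 1) * t := by
    rw [Finset.card_univ, hV]
  have hWle : s * (n + t) ≤ (Finset.univ : Finset V).card := by
    rw [hcard]; nlinarith
  obtain ⟨A, W', hAsub, hW'sub, hAdisj, hAW', hAcard, hbound, hblueA, hblueW⟩ :=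
    iterate_blue G c n t hc s Finset.univ hWle
  have hm : (s + d - s) * n + (s + d - s + 1) * t = d * n + (d + 1) * t := by
    congr 2 <;> omega
  have hmle : d * n + (d + 1) * t ≤ W'.card := by
    have : (s + d) * n + (s + d + 1) * t = d * n + (d + 1) * t + s * (n + t) := by ring
    omega
  obtain ⟨W'', hW''sub, hW''card⟩ := Finset.exists_subset_card_eq hmle
  refine ⟨Fin.snoc A W'', ?_, ?_, ?_, ?_⟩
  · intro i j hij
    induction i using Fin.lastCases with
    | last =>
      induction j using Fin.lastCases with
      | last => exact absurd rfl hij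
      | cast j =>
        simp only [Fin.snoc_last, Fin.snoc_castSucc]
        exact ((hAW' j).mono_right hW''sub).symm
    | cast i =>
      induction j using Fin.lastCases with
      | last =>
        simp only [Fin.snoc_last, Fin.snoc_castSucc]
        exact (hAW' i).mono_right hW''sub
      | cast j =>
        simp only [Fin.snoc_castSucc]
        exact hAdisj i j (fun h => hij (by rw [h]))
  · intro i hi
    induction i using Fin.lastCases with
    | last => simp at hi
    | cast i => simpa using hAcard i
  · rw [Fin.snoc_last, hW''card, hm]
  · intro i j hij u hu v hv hadj
    have key : ¬(G.Adj u v ∧ c s(u, v) = true) → c s(u, v) = false := by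
      intro h
      rcases Bool.eq_false_or_eq_true (c s(u, v)) with h' | h'
      · exact absurd ⟨hadj, h'⟩ h
      · exact h'
    apply key
    clear key
    induction i using Fin.lastCases with
    | last =>
      induction j using Fin.lastCases with
      | last => exact absurd rfl hij
      | cast j =>
        simp only [Fin.snoc_last, Fin.snoc_castSucc] at hu hv
        intro hcon
        exact hblueW j v hv u (hW''sub hu) ⟨hcon.1.symm, by rw [Sym2.eq_swap]; exact hcon.2⟩
    | cast i =>
      induction j using Fin.lastCases with
      | last =>
        simp only [Fin.snoc_last, Fin.snoc_castSucc] at hu hv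
        exact hblueW i u hu v (hW''sub hv)
      | cast j =>
        simp only [Fin.snoc_castSucc] at hu hv
        exact hblueA i j (fun h => hij (by rw [h])) u hu v hv
end

section
/- For all integers r ≥ 1 and m ≥ 1, the Ramsey number of the complete graph K_r versus any tree T on m vertices satisfies R(K_r, T) = (r - 1)(m - 1) + 1. -/
open SimpleGraph Finset

/-- `G` contains a copy of `H` (a subgraph isomorphic to `H`). -/
def ContainsCopy {V W : Type*} (G : SimpleGraph V) (H : SimpleGraph W) : Prop :=
  ∃ f : W ↪ V, ∀ a b, H.Adj a b → G.Adj (f a) (f b)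

/-- The Ramsey number `R(H, G)`: the least `N` such that every red-blue colouring of the
edges of `K_N` (the red graph `R` being an arbitrary graph on `Fin N`, blue graph `Rᶜ`)
contains a red copy of `H` or a blue copy of `G`. -/
noncomputable def ramseyNumber {V W : Type*} (H : SimpleGraph V) (G : SimpleGraph W) : ℕ :=
  sInf {N | ∀ R : SimpleGraph (Fin N), ContainsCopy R H ∨ ContainsCopy Rᶜ G}

section Aux

variable {V : Type*} {T : SimpleGraph V} [DecidableRel T.Adj]

/-- Every vertex of a connected graph with at least two vertices has positive degree. -/
lemma degree_pos_of_connected [Fintype V] (hc : T.Connected)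
    (h2 : 2 ≤ Fintype.card V) (v : V) : 0 < T.degree v := by
  classical
  obtain ⟨w, hw⟩ := Fintype.exists_ne_of_one_lt_card (by omega) v
  obtain ⟨p⟩ := hc.preconnected v w
  rw [SimpleGraph.degree_pos_iff_exists_adj]
  cases p with
  | nil => exact absurd rfl hw.symm
  | cons h q => exact ⟨_, h⟩

/-- Every finite tree with at least two vertices has a leaf. -/
lemma exists_leaf [Fintype V] (hT : T.IsTree) (h2 : 2 ≤ Fintype.card V) :
    ∃ u w, T.Adj u w ∧ T.degree u = 1 := by
  classical
  by_contra hcon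
  push_neg at hcon
  have hdeg : ∀ v : V, 2 ≤ T.degree v := by
    intro v
    have h1 : 0 < T.degree v := degree_pos_of_connected hT.isConnected h2 v
    obtain ⟨w, hw⟩ := (SimpleGraph.degree_pos_iff_exists_adj _ _).mp h1
    have := hcon v w hw
    omega
  have hsum : ∑ v : V, T.degree v = 2 * T.edgeFinset.card :=
    SimpleGraph.sum_degrees_eq_twice_card_edges T
  have hedge : T.edgeFinset.card + 1 = Fintype.card V := hT.card_edgeFinset
  have hge : 2 * Fintype.card V ≤ ∑ v : V, T.degree v := by
    calc 2 * Fintype.card V = ∑ _v : V, 2 := by simp [mul_comm]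
    _ ≤ ∑ v : V, T.degree v := Finset.sum_le_sum fun v _ => hdeg v
  omega

/-- A leaf is not in the support of any path between two other vertices. -/
lemma leaf_not_mem_support [Fintype V] {u a b : V} (hdeg : T.degree u = 1)
    {p : T.Walk a b} (hp : p.IsPath) (ha : a ≠ u) (hb : b ≠ u) : u ∉ p.support := by
  classical
  intro hu
  -- the two neighbours of u on the path coincide, contradicting path-ness
  have huniq : ∀ x y : V, T.Adj u x → T.Adj u y → x = y := by
    intro x y hx hy
    have h1 : (T.neighborFinset u).card ≤ 1 := by
      rw [← SimpleGraph.degree] ; omega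
    exact Finset.card_le_one.mp h1 x (by simp [hx]) y (by simp [hy])
  set t := p.takeUntil u hu with ht
  set q := p.dropUntil u hu with hq
  have hspec : t.append q = p := p.take_spec hu
  have hqn : ¬ q.Nil := SimpleGraph.Walk.not_nil_of_ne (fun h => hb h.symm)
  have htn : ¬ t.reverse.Nil := SimpleGraph.Walk.not_nil_of_ne (fun h => ha h.symm)
  set x := q.getVert 1 with hx
  set y := t.reverse.getVert 1 with hy
  have hxadj : T.Adj u x := q.adj_snd hqn
  have hyadj : T.Adj u y := t.reverse.adj_snd htn
  have hxy : x = y := huniq x y hxadj hyadj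
  -- y is in t.support
  have hyt : y ∈ t.support := by
    have : y ∈ t.reverse.support := by
      rw [SimpleGraph.Walk.mem_support_iff_exists_getVert]
      refine ⟨1, rfl, ?_⟩
      rw [SimpleGraph.Walk.nil_iff_length_eq] at htn
      omega
    rwa [SimpleGraph.Walk.support_reverse, List.mem_reverse] at this
  -- x is in q.support.tail
  have hxq : x ∈ q.support.tail := by
    rw [← SimpleGraph.Walk.support_tail_of_not_nil q hqn]
    exact SimpleGraph.Walk.start_mem_support _
  -- contradiction with nodup of p.support
  have hnodup : (t.support ++ q.support.tail).Nodup := by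
    rw [← SimpleGraph.Walk.support_append, hspec]
    exact hp.support_nodup
  exact (List.disjoint_of_nodup_append hnodup) hyt (hxy ▸ hxq)

end Aux

/-- Walks avoiding the complement of `s` lift to reachability in the induced subgraph. -/
lemma reachable_induce_of_support {V : Type*} {T : SimpleGraph V} {s : Set V} :
    ∀ {a b : V} (p : T.Walk a b) (hs : ∀ x ∈ p.support, x ∈ s),
    (T.induce s).Reachable ⟨a, hs a p.start_mem_support⟩ ⟨b, hs b p.end_mem_support⟩ := by
  intro a b p
  induction p with
  | nil => intro hs; exact SimpleGraph.Reachable.refl _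
  | @cons a c b h q ih =>
    intro hs
    have hadj : (T.induce s).Adj ⟨a, hs a (SimpleGraph.Walk.start_mem_support _)⟩
        ⟨c, hs c (by simp)⟩ := h
    exact hadj.reachable.trans (ih fun x hx => hs x (by simp [hx]))

/-- Deleting a leaf from a tree yields a tree. -/
lemma isTree_delete_leaf {V : Type*} [Fintype V] {T : SimpleGraph V} [DecidableRel T.Adj]
    {u w : V} (hT : T.IsTree) (huw : T.Adj u w) (hdeg : T.degree u = 1) :
    (T.induce {x | x ≠ u}).IsTree := by
  classical
  constructor
  · rw [SimpleGraph.connected_iff]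
    refine ⟨?_, ⟨⟨w, huw.ne'⟩⟩⟩
    rintro ⟨a, ha⟩ ⟨b, hb⟩
    obtain ⟨p0⟩ := hT.isConnected.preconnected a b
    have hbp : p0.bypass.IsPath := p0.bypass_isPath
    have hu : u ∉ p0.bypass.support := leaf_not_mem_support hdeg hbp ha hb
    exact reachable_induce_of_support p0.bypass
      (fun x hx => by intro hxu; exact hu (hxu ▸ hx))
  · intro v c hc
    have hmap := hc.map (f := SimpleGraph.Embedding.induce {x | x ≠ u} |>.toHom)
      Subtype.val_injective
    exact hT.IsAcyclic _ hmap

/-- Chvatal's theorem, inductive form. -/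
lemma chvatal (n : ℕ) : ∀ (r m : ℕ), 1 ≤ r → 1 ≤ m → r + m ≤ n →
    ∀ {V : Type*} [Fintype V] (R : SimpleGraph V) {VT : Type*} [Fintype VT]
    (T : SimpleGraph VT), T.IsTree → Fintype.card VT = m →
    (r - 1) * (m - 1) + 1 ≤ Fintype.card V →
    ContainsCopy R (⊤ : SimpleGraph (Fin r)) ∨ ContainsCopy Rᶜ T := by
  induction n with
  | zero => intro r m hr hm hn; omega
  | succ n ih =>
    intro r m hr hm hn V _ R VT _ T hT hTcard hV
    classical
    rcases Nat.lt_or_ge r 2 with hr2 | hr2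
    · -- base case r = 1
      have hr1 : r = 1 := by omega
      subst hr1
      left
      obtain ⟨v⟩ : Nonempty V := Fintype.card_pos_iff.mp (by omega)
      refine ⟨⟨fun _ => v, fun a b _ => Subsingleton.elim a b⟩, ?_⟩
      intro a b hab
      exact absurd (Subsingleton.elim a b) hab.ne
    rcases Nat.lt_or_ge m 2 with hm2 | hm2
    · -- base case m = 1
      have hm1 : m = 1 := by omega
      right
      obtain ⟨v⟩ : Nonempty V := Fintype.card_pos_iff.mp (by omega)
      have hsub : Subsingleton VT :=
        Fintype.card_le_one_iff_subsingleton.mp (by omega)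
      refine ⟨⟨fun _ => v, fun a b _ => Subsingleton.elim a b⟩, ?_⟩
      intro a b hab
      exact absurd (Subsingleton.elim a b) hab.ne
    -- main inductive step
    obtain ⟨u, w, huw, hdeg⟩ := exists_leaf hT (by omega)
    have huniq : ∀ x : VT, T.Adj u x → x = w := by
      intro x hx
      have h1 : (T.neighborFinset u).card ≤ 1 := by
        rw [← SimpleGraph.degree]; omega
      exact Finset.card_le_one.mp h1 x (by simp [hx]) w (by simp [huw])
    set s : Set VT := {x | x ≠ u} with hs
    have hws : w ∈ s := huw.ne'
    have hScard : Fintype.card ↥s = m - 1 := by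
      have h := Fintype.card_subtype_compl (fun x : VT => x = u)
      rw [Fintype.card_subtype_eq, hTcard] at h
      rw [← h]
      exact Fintype.card_congr (Equiv.subtypeEquivRight (by simp [hs]))
    have htree' : (T.induce s).IsTree := isTree_delete_leaf hT huw hdeg
    have hstep1 := ih r (m - 1) hr (by omega) (by omega) R (T.induce s) htree'
      hScard (le_trans (by
        have := Nat.mul_le_mul_left (r - 1) (show m - 1 - 1 ≤ m - 1 by omega)
        omega) hV)
    rcases hstep1 with hred | ⟨g, hg⟩
    · exact Or.inl hred
    set x : V := g ⟨w, hws⟩ with hxdef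
    have hxS : x ∈ Set.range ⇑g := ⟨⟨w, hws⟩, rfl⟩
    by_cases hcaseA : ∃ y, y ∉ Set.range ⇑g ∧ Rᶜ.Adj x y
    · -- extend the blue copy of T' by the leaf
      obtain ⟨y, hyS, hyadj⟩ := hcaseA
      right
      refine ⟨⟨fun z => if hz : z = u then y else g ⟨z, hz⟩, ?_⟩, ?_⟩
      · intro z₁ z₂ h12
        dsimp only at h12
        by_cases h1 : z₁ = u <;> by_cases h2 : z₂ = u
        · rw [h1, h2]
        · rw [dif_pos h1, dif_neg h2] at h12
          exact absurd ⟨_, h12.symm⟩ hyS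
        · rw [dif_neg h1, dif_pos h2] at h12
          exact absurd ⟨_, h12⟩ hyS
        · rw [dif_neg h1, dif_neg h2] at h12
          simpa using congrArg Subtype.val (g.injective h12)
      · intro a b hab
        show Rᶜ.Adj (if ha : a = u then y else g ⟨a, ha⟩) (if hb : b = u then y else g ⟨b, hb⟩)
        by_cases h1 : a = u <;> by_cases h2 : b = u
        · exact absurd (h1.trans h2.symm) hab.ne
        · rw [dif_pos h1, dif_neg h2]
          have hbw : b = w := huniq b (h1 ▸ hab)
          have : g ⟨b, h2⟩ = x := by rw [hxdef]; congr 1; exact Subtype.ext hbw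
          rw [this]
          exact hyadj.symm
        · rw [dif_neg h1, dif_pos h2]
          have haw : a = w := huniq a (h2 ▸ hab).symm
          have : g ⟨a, h1⟩ = x := by rw [hxdef]; congr 1; exact Subtype.ext haw
          rw [this]
          exact hyadj
        · rw [dif_neg h1, dif_neg h2]
          exact hg ⟨a, h1⟩ ⟨b, h2⟩ hab
    · -- all vertices outside S are red-adjacent to x
      push_neg at hcaseA
      have hred : ∀ y, y ∉ Set.range ⇑g → R.Adj x y := by
        intro y hy
        have h1 := hcaseA y hy
        rw [SimpleGraph.compl_adj] at h1
        push_neg at h1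
        exact h1 (fun hxy => hy (hxy ▸ hxS))
      obtain ⟨s', rfl⟩ : ∃ s', r = s' + 1 := ⟨r - 1, by omega⟩
      have hs'1 : 1 ≤ s' := by omega
      have hWcard : Fintype.card ↥((Set.range ⇑g)ᶜ) = Fintype.card V - (m - 1) := by
        rw [Fintype.card_compl_set, Set.card_range_of_injective g.injective, hScard]
      have hV' : (s' - 1) * (m - 1) + 1 ≤ Fintype.card ↥((Set.range ⇑g)ᶜ) := by
        have e1 : (s' - 1) * (m - 1) = s' * (m - 1) - (m - 1) := Nat.sub_one_mul _ _
        have e2 : m - 1 ≤ s' * (m - 1) := Nat.le_mul_of_pos_left _ (by omega)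
        have e3 : (s' + 1 - 1) * (m - 1) = s' * (m - 1) := by norm_num
        rw [e3] at hV
        omega
      have hstep2 := ih s' m hs'1 hm (by omega) (R.induce ((Set.range ⇑g)ᶜ)) T hT
        hTcard hV'
      rcases hstep2 with ⟨h, hh⟩ | ⟨g2, hg2⟩
      · -- red K_{s'} in W plus x gives red K_{s'+1}
        left
        have hxW : x ∉ (Set.range ⇑g)ᶜ := by simpa using hxS
        refine ⟨⟨fun i => Fin.cases x (fun j => ((h j : ↥((Set.range ⇑g)ᶜ)) : V)) i, ?_⟩, ?_⟩
        · intro i j hij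
          induction i using Fin.cases with
          | zero =>
            induction j using Fin.cases with
            | zero => rfl
            | succ j =>
              simp only [Fin.cases_zero, Fin.cases_succ] at hij
              exact absurd (hij ▸ (h j).2) hxW
          | succ i =>
            induction j using Fin.cases with
            | zero =>
              simp only [Fin.cases_zero, Fin.cases_succ] at hij
              exact absurd (hij ▸ (h i).2) hxW
            | succ j =>
              dsimp only at hij
              rw [Fin.cases_succ, Fin.cases_succ] at hij
              exact congrArg Fin.succ (h.injective (Subtype.val_injective hij))
        · intro i j hij
          have hne : i ≠ j := hij.ne
          show R.Adj (Fin.cases x (fun j => ((h j : ↥((Set.range ⇑g)ᶜ)) : V)) i : V)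
            (Fin.cases x (fun j => ((h j : ↥((Set.range ⇑g)ᶜ)) : V)) j : V)
          induction i using Fin.cases with
          | zero =>
            induction j using Fin.cases with
            | zero => exact absurd rfl hne
            | succ j =>
              simp only [Fin.cases_zero, Fin.cases_succ]
              exact hred _ (h j).2
          | succ i =>
            induction j using Fin.cases with
            | zero =>
              simp only [Fin.cases_zero, Fin.cases_succ]
              exact (hred _ (h i).2).symm
            | succ j =>
              simp only [Fin.cases_succ]
              have hij' : i ≠ j := fun hc => hne (by rw [hc])
              exact hh i j (by simp [hij'])
      · -- blue T in W
        right
        refine ⟨g2.trans (Function.Embedding.subtype _), ?_⟩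
        intro a b hab
        have h2 := hg2 a b hab
        rw [SimpleGraph.compl_adj] at h2 ⊢
        exact ⟨Subtype.val_injective.ne h2.1, fun hR => h2.2 hR⟩


theorem stmt_17 (r m : ℕ) (hr : 1 ≤ r) (hm : 1 ≤ m)
    {VT : Type*} [Fintype VT] (T : SimpleGraph VT)
    (hT : T.IsTree) (hcard : Fintype.card VT = m) :
    ramseyNumber (⊤ : SimpleGraph (Fin r)) T = (r - 1) * (m - 1) + 1 := by
  classical
  have hk : ((r - 1) * (m - 1) + 1) ∈
      {N | ∀ R : SimpleGraph (Fin N), ContainsCopy R (⊤ : SimpleGraph (Fin r)) ∨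
        ContainsCopy Rᶜ T} := by
    intro R
    exact chvatal (r + m) r m hr hm le_rfl R T hT hcard (by simp)
  refine le_antisymm (Nat.sInf_le hk) (le_csInf ⟨_, hk⟩ ?_)
  intro N hN
  by_contra hlt
  push_neg at hlt
  have hNle : N ≤ (r - 1) * (m - 1) := by omega
  rcases Nat.lt_or_ge m 2 with hm2 | hm2
  · -- m = 1 so N = 0
    have hN0 : N = 0 := by
      have hm1 : m = 1 := by omega
      rw [hm1] at hNle; simpa using hNle
    subst hN0
    rcases hN ⊥ with ⟨f, -⟩ | ⟨f, -⟩
    · exact (f ⟨0, hr⟩).elim0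
    · obtain ⟨a⟩ : Nonempty VT := Fintype.card_pos_iff.mp (by omega)
      exact (f a).elim0
  rcases Nat.lt_or_ge r 2 with hr2 | hr2
  · -- r = 1 so N = 0
    have hN0 : N = 0 := by
      have hr1 : r = 1 := by omega
      rw [hr1] at hNle; simpa using hNle
    subst hN0
    rcases hN ⊥ with ⟨f, -⟩ | ⟨f, -⟩
    · exact (f ⟨0, hr⟩).elim0
    · obtain ⟨a⟩ : Nonempty VT := Fintype.card_pos_iff.mp (by omega)
      exact (f a).elim0
  -- main case: the extremal colouring by blocks of size m - 1
  have ha1 : 1 ≤ m - 1 := by omega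
  set R : SimpleGraph (Fin N) :=
    { Adj := fun i j => (i : ℕ) / (m - 1) ≠ (j : ℕ) / (m - 1)
      symm := ⟨fun i j hij => hij.symm⟩
      loopless := ⟨fun i hi => hi rfl⟩ } with hRdef
  have hRadj : ∀ i j : Fin N, R.Adj i j ↔ (i : ℕ) / (m - 1) ≠ (j : ℕ) / (m - 1) := by
    exact fun i j => Iff.rfl
  rcases hN R with ⟨f, hf⟩ | ⟨f, hf⟩
  · -- no red K_r : blocks are injective into Fin (r-1)
    have hblock : ∀ i : Fin r, (f i : ℕ) / (m - 1) < r - 1 := by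
      intro i
      have h1 : (f i : ℕ) < (r - 1) * (m - 1) := lt_of_lt_of_le (f i).isLt hNle
      exact Nat.div_lt_of_lt_mul (by rwa [mul_comm] at h1)
    have hinj : Function.Injective
        (fun i : Fin r => (⟨(f i : ℕ) / (m - 1), hblock i⟩ : Fin (r - 1))) := by
      intro i j hij
      by_contra hne
      have hadj := hf i j (by simpa using hne)
      rw [hRadj] at hadj
      exact hadj (congrArg Fin.val hij)
    have hle := Fintype.card_le_of_injective _ hinj
    simp only [Fintype.card_fin] at hle
    omega
  · -- no blue T : all of T sits in one block of size m - 1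
    obtain ⟨x0⟩ : Nonempty VT := Fintype.card_pos_iff.mp (by omega)
    have hblk : ∀ x y : VT, T.Adj x y → (f x : ℕ) / (m - 1) = (f y : ℕ) / (m - 1) := by
      intro x y hxy
      have h2 := hf x y hxy
      rw [SimpleGraph.compl_adj, hRadj] at h2
      exact not_not.mp h2.2
    have hconst : ∀ x : VT, (f x : ℕ) / (m - 1) = (f x0 : ℕ) / (m - 1) := by
      intro x
      obtain ⟨p⟩ := hT.isConnected.preconnected x x0
      induction p with
      | nil => rfl
      | cons h q ih => exact (hblk _ _ h).trans ih
    have hinj : Function.Injective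
        (fun x : VT => (⟨(f x : ℕ) % (m - 1), Nat.mod_lt _ (by omega)⟩ : Fin (m - 1))) := by
      intro x y hxy
      apply f.injective
      apply Fin.val_injective
      have h1 : (f x : ℕ) / (m - 1) = (f y : ℕ) / (m - 1) := by
        rw [hconst x, hconst y]
      have h2 : (f x : ℕ) % (m - 1) = (f y : ℕ) % (m - 1) := congrArg Fin.val hxy
      calc (f x : ℕ) = (m - 1) * ((f x : ℕ) / (m - 1)) + (f x : ℕ) % (m - 1) :=
            (Nat.div_add_mod _ _).symm
        _ = (m - 1) * ((f y : ℕ) / (m - 1)) + (f y : ℕ) % (m - 1) := by rw [h1, h2]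
        _ = (f y : ℕ) := Nat.div_add_mod _ _
    have hle := Fintype.card_le_of_injective _ hinj
    simp only [Fintype.card_fin, hcard] at hle
    omega
end

section
/- Let r ≥ 2, n, t ≥ 1, and let G be a graph on rn + t vertices such that every collection of r+1 pairwise disjoint vertex sets of size ⌊t/(r+1)⌋ spans a copy of K_{r+1} (i.e., there exist vertices v_1, ..., v_{r+1}, one in each set, pairwise adjacent in G). Then G → (K_{r+1}, P_n): every red-blue colouring of E(G) contains a blue copy of K_{r+1} or a red path with n edges. -/
open SimpleGraph Finset

/-- The colouring `c` (with `false` = blue) contains a blue copy of `K_m` in `G`. -/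
def BlueClique {V : Type*} (G : SimpleGraph V) (c : Sym2 V → Bool) (m : ℕ) : Prop :=
  ∃ f : Fin m ↪ V, ∀ i j : Fin m, i ≠ j → G.Adj (f i) (f j) ∧ c s(f i, f j) = false

/-- The red subgraph determined by a colouring. -/
private def redSub {V : Type*} (G : SimpleGraph V) (c : Sym2 V → Bool) : SimpleGraph V where
  Adj x y := G.Adj x y ∧ c s(x, y) = true
  symm := by
    refine ⟨fun x y h => ?_⟩
    exact ⟨h.1.symm, by rw [Sym2.eq_swap]; exact h.2⟩
  loopless := by refine ⟨fun x h => ?_⟩; exact G.irrefl h.1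

/-- DFS lemma: in a graph with no path of `n` edges, from any DFS state we can reach
a state with `m` finished vertices, at most `n` on the active path, and no edges from
finished to unexplored. -/
private lemma dfsAux {V : Type*} [DecidableEq V] (R : SimpleGraph V) (n m : ℕ)
    (hno : ∀ (u w : V) (p : R.Walk u w), p.IsPath → p.length ≠ n) :
    ∀ (k : ℕ) (W T U : Finset V) (v w : V) (p : R.Walk v w),
      2 * U.card + p.support.length ≤ k →
      p.IsPath → p.length < n →
      (∀ x ∈ p.support, x ∈ W ∧ x ∉ T ∧ x ∉ U) →
      T ⊆ W → U ⊆ W → Disjoint T U →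
      T.card + p.support.length + U.card = W.card →
      (∀ x ∈ T, ∀ y ∈ U, ¬ R.Adj x y) →
      T.card < m → m ≤ W.card →
      ∃ T' U' : Finset V, T' ⊆ W ∧ U' ⊆ W ∧ Disjoint T' U' ∧
        T'.card = m ∧ W.card ≤ U'.card + m + n ∧
        (∀ x ∈ T', ∀ y ∈ U', ¬ R.Adj x y) := by
  intro k
  induction k with
  | zero =>
    intro W T U v w p hk _ _ _ _ _ _ _ _ _ _
    have := p.length_support
    omega
  | succ k ih =>
    intro W T U v w p hk hp hlen hsup hTW hUW hTU hcount hTUadj hTm hmW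
    by_cases hadj : ∃ u ∈ U, R.Adj v u
    · -- extend the path into U
      obtain ⟨u, huU, huv⟩ := hadj
      have hUpos : 0 < U.card := card_pos.mpr ⟨u, huU⟩
      have hup : u ∉ p.support := fun h => (hsup u h).2.2 huU
      have hp' : (Walk.cons huv.symm p).IsPath := hp.cons hup
      have hlen' : p.length + 1 < n := by
        have h1 := hno u w (Walk.cons huv.symm p) hp'
        rw [Walk.length_cons] at h1
        omega
      refine ih W T (U.erase u) u w (Walk.cons huv.symm p) ?_ hp' ?_ ?_ hTW
        (fun x hx => hUW (mem_of_mem_erase hx))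
        (Finset.disjoint_of_subset_right (fun x hx => mem_of_mem_erase hx) hTU)
        ?_ (fun x hx y hy => hTUadj x hx y (mem_of_mem_erase hy)) hTm hmW
      · rw [Walk.support_cons, List.length_cons, card_erase_of_mem huU]
        omega
      · rwa [Walk.length_cons]
      · intro x hx
        rw [Walk.support_cons, List.mem_cons] at hx
        rcases hx with rfl | hx
        · exact ⟨hUW huU, fun h => Finset.disjoint_left.mp hTU h huU, notMem_erase _ _⟩
        · obtain ⟨h1, h2, h3⟩ := hsup x hx
          exact ⟨h1, h2, fun h => h3 (mem_of_mem_erase h)⟩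
      · rw [Walk.support_cons, List.length_cons, card_erase_of_mem huU]
        omega
    · push_neg at hadj
      cases p with
      | nil =>
        obtain ⟨hvW, hvT, hvU⟩ := hsup v (by simp)
        have hvTcard : (insert v T).card = T.card + 1 := card_insert_of_notMem hvT
        by_cases hstop : T.card + 1 = m
        · refine ⟨insert v T, U, insert_subset hvW hTW, hUW, ?_, ?_, ?_, ?_⟩
          · rw [Finset.disjoint_insert_left]; exact ⟨hvU, hTU⟩
          · omega
          · simp only [Walk.support_nil, List.length_singleton] at hcount
            omega
          · intro x hx y hy
            rcases Finset.mem_insert.mp hx with rfl | hx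
            · exact hadj y hy
            · exact hTUadj x hx y hy
        · have hUne : U.Nonempty := by
            rcases U.eq_empty_or_nonempty with rfl | h
            · simp only [Walk.support_nil, List.length_singleton, card_empty] at hcount
              omega
            · exact h
          obtain ⟨u, huU⟩ := hUne
          have huv : u ≠ v := fun h => hvU (h ▸ huU)
          refine ih W (insert v T) (U.erase u) u u Walk.nil ?_ Walk.IsPath.nil hlen ?_
            (insert_subset hvW hTW) (fun x hx => hUW (mem_of_mem_erase hx)) ?_ ?_ ?_ ?_ hmW
          · rw [Walk.support_nil, List.length_singleton, card_erase_of_mem huU]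
            simp only [Walk.support_nil, List.length_singleton] at hk
            have := card_pos.mpr ⟨u, huU⟩
            omega
          · intro x hx
            rw [Walk.support_nil, List.mem_singleton] at hx
            subst hx
            refine ⟨hUW huU, ?_, notMem_erase _ _⟩
            rw [Finset.mem_insert]
            rintro (rfl | h)
            · exact huv rfl
            · exact Finset.disjoint_left.mp hTU h huU
          · rw [Finset.disjoint_insert_left]
            exact ⟨fun h => hvU (mem_of_mem_erase h),
              Finset.disjoint_of_subset_right (fun x hx => mem_of_mem_erase hx) hTU⟩
          · rw [Walk.support_nil, List.length_singleton, card_erase_of_mem huU] at *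
            have := card_pos.mpr ⟨u, huU⟩
            omega
          · intro x hx y hy
            rcases Finset.mem_insert.mp hx with rfl | hx
            · exact hadj y (mem_of_mem_erase hy)
            · exact hTUadj x hx y (mem_of_mem_erase hy)
          · omega
      | @cons _ v' _ h q =>
        rw [Walk.cons_isPath_iff] at hp
        obtain ⟨hvW, hvT, hvU⟩ := hsup v (by simp)
        have hvTcard : (insert v T).card = T.card + 1 := card_insert_of_notMem hvT
        have hql : q.support.length = q.length + 1 := q.length_support
        have hsc : (Walk.cons h q).support.length = q.support.length + 1 := by
          rw [Walk.support_cons, List.length_cons]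
        have hlc : (Walk.cons h q).length = q.length + 1 := Walk.length_cons _ _
        by_cases hstop : T.card + 1 = m
        · refine ⟨insert v T, U, insert_subset hvW hTW, hUW, ?_, ?_, ?_, ?_⟩
          · rw [Finset.disjoint_insert_left]; exact ⟨hvU, hTU⟩
          · omega
          · omega
          · intro x hx y hy
            rcases Finset.mem_insert.mp hx with rfl | hx
            · exact hadj y hy
            · exact hTUadj x hx y hy
        · refine ih W (insert v T) U v' w q ?_ hp.1 ?_ ?_ (insert_subset hvW hTW) hUW ?_ ?_ ?_ ?_ hmW
          · omega
          · omega
          · intro x hx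
            obtain ⟨h1, h2, h3⟩ := hsup x (by rw [Walk.support_cons]; exact List.mem_cons_of_mem _ hx)
            refine ⟨h1, ?_, h3⟩
            rw [Finset.mem_insert]
            rintro (rfl | hm)
            · exact hp.2 hx
            · exact h2 hm
          · rw [Finset.disjoint_insert_left]; exact ⟨hvU, hTU⟩
          · omega
          · intro x hx y hy
            rcases Finset.mem_insert.mp hx with rfl | hx
            · exact hadj y hy
            · exact hTUadj x hx y hy
          · omega

/-- In a graph with no path of `n` edges, any large enough set contains `k` pairwise
disjoint sets of size `t'` with no edges between distinct sets. -/
private lemma blueSets {V : Type*} [DecidableEq V] (R : SimpleGraph V) (n t' : ℕ) (hn : 0 < n)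
    (hno : ∀ (u w : V) (p : R.Walk u w), p.IsPath → p.length ≠ n) :
    ∀ (k : ℕ) (W : Finset V), k * (n + t') ≤ W.card + n →
      ∃ A : Fin k → Finset V, (∀ i, A i ⊆ W) ∧
        (∀ i j, i ≠ j → Disjoint (A i) (A j)) ∧
        (∀ i, (A i).card = t') ∧
        (∀ i j, i ≠ j → ∀ x ∈ A i, ∀ y ∈ A j, ¬ R.Adj x y) := by
  intro k
  induction k with
  | zero =>
    intro W _
    exact ⟨fun i => i.elim0, fun i => i.elim0, fun i => i.elim0, fun i => i.elim0,
      fun i => i.elim0⟩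
  | succ k ih =>
    intro W hW
    rcases Nat.eq_zero_or_pos t' with ht0 | ht0
    · refine ⟨fun _ => ∅, fun _ => empty_subset _, fun _ _ _ => disjoint_empty_left _,
        fun _ => by simp [ht0], fun _ _ _ x hx => absurd hx (notMem_empty x)⟩
    have hq : (k + 1) * (n + t') = k * (n + t') + n + t' := by ring
    have ht'W : t' ≤ W.card := by omega
    obtain ⟨w0, hw0⟩ : W.Nonempty := card_pos.mp (lt_of_lt_of_le ht0 ht'W)
    obtain ⟨T', U', hT'W, hU'W, hT'U', hT'card, hWcard, hadj⟩ :=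
      dfsAux R n t' hno (2 * (W.erase w0).card + 1) W ∅ (W.erase w0) w0 w0 Walk.nil
        (by rw [Walk.support_nil, List.length_singleton])
        Walk.IsPath.nil (by simpa using hn)
        (by
          intro x hx
          rw [Walk.support_nil, List.mem_singleton] at hx
          subst hx
          exact ⟨hw0, notMem_empty _, notMem_erase _ _⟩)
        (empty_subset _) (fun x hx => mem_of_mem_erase hx) (disjoint_empty_left _)
        (by
          rw [Walk.support_nil, List.length_singleton, card_erase_of_mem hw0, card_empty]
          have := card_pos.mpr ⟨w0, hw0⟩
          omega)
        (fun x hx => absurd hx (notMem_empty x)) (by simpa using ht0) ht'W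
    have hU'card : k * (n + t') ≤ U'.card + n := by omega
    obtain ⟨A, hAW, hAdisj, hAcard, hAadj⟩ := ih U' hU'card
    refine ⟨Fin.cons T' A, ?_, ?_, ?_, ?_⟩
    · intro i
      rcases Fin.eq_zero_or_eq_succ i with rfl | ⟨i', rfl⟩
      · simpa using hT'W
      · simp only [Fin.cons_succ]
        exact (hAW i').trans hU'W
    · intro i j hij
      rcases Fin.eq_zero_or_eq_succ i with rfl | ⟨i', rfl⟩ <;>
        rcases Fin.eq_zero_or_eq_succ j with rfl | ⟨j', rfl⟩
      · exact absurd rfl hij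
      · simp only [Fin.cons_zero, Fin.cons_succ]
        exact Finset.disjoint_of_subset_right (hAW j') hT'U'
      · simp only [Fin.cons_zero, Fin.cons_succ]
        exact Finset.disjoint_of_subset_left (hAW i') hT'U'.symm
      · simp only [Fin.cons_succ]
        exact hAdisj i' j' (fun hh => hij (by rw [hh]))
    · intro i
      rcases Fin.eq_zero_or_eq_succ i with rfl | ⟨i', rfl⟩
      · simpa using hT'card
      · simpa using hAcard i'
    · intro i j hij x hx y hy
      rcases Fin.eq_zero_or_eq_succ i with rfl | ⟨i', rfl⟩ <;>
        rcases Fin.eq_zero_or_eq_succ j with rfl | ⟨j', rfl⟩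
      · exact absurd rfl hij
      · simp only [Fin.cons_zero] at hx
        simp only [Fin.cons_succ] at hy
        exact hadj x hx y (hAW j' hy)
      · simp only [Fin.cons_succ] at hx
        simp only [Fin.cons_zero] at hy
        intro hR
        exact hadj y hy x (hAW i' hx) hR.symm
      · simp only [Fin.cons_succ] at hx hy
        exact hAadj i' j' (fun hh => hij (by rw [hh])) x hx y hy

theorem stmt_18 {V : Type*} [Fintype V] (G : SimpleGraph V) (r n t : ℕ)
    (hr : 2 ≤ r) (hn : 0 < n) (ht : 0 < t)
    (hV : Fintype.card V = r * n + t)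
    (hspan : ∀ A : Fin (r + 1) → Finset V,
      (∀ i j, i ≠ j → Disjoint (A i) (A j)) →
      (∀ i, (A i).card = t / (r + 1)) →
      ∃ f : Fin (r + 1) → V, (∀ i, f i ∈ A i) ∧
        ∀ i j, i ≠ j → G.Adj (f i) (f j)) :
    ∀ c : Sym2 V → Bool, BlueClique G c (r + 1) ∨ RedPathLen G c n := by
  classical
  intro c
  by_cases hred : RedPathLen G c n
  · exact Or.inr hred
  left
  have hno : ∀ (u w : V) (p : (redSub G c).Walk u w), p.IsPath → p.length ≠ n := by
    intro u w p hp hl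
    apply hred
    have hsub : ∀ e ∈ p.edges, e ∈ G.edgeSet := by
      intro e he
      have hmem := p.edges_subset_edgeSet he
      revert hmem
      refine Sym2.ind (fun x y => ?_) e
      intro hxy
      exact hxy.1
    refine ⟨u, w, p.transfer G hsub, hp.transfer hsub, ?_, ?_⟩
    · rw [Walk.length_transfer]; exact hl
    · intro e he
      rw [Walk.edges_transfer] at he
      have hmem := p.edges_subset_edgeSet he
      revert hmem
      refine Sym2.ind (fun x y => ?_) e
      intro hxy
      exact hxy.2
  rcases Nat.eq_zero_or_pos (t / (r + 1)) with ht0 | ht0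
  · obtain ⟨f, hf, -⟩ := hspan (fun _ => ∅) (fun _ _ _ => disjoint_empty_left _)
      (fun _ => by simp [ht0])
    exact absurd (hf 0) (notMem_empty _)
  · have hcard : (r + 1) * (n + t / (r + 1)) ≤ (univ : Finset V).card + n := by
      have h1 : t / (r + 1) * (r + 1) ≤ t := Nat.div_mul_le_self t (r + 1)
      have h2 : (r + 1) * (n + t / (r + 1)) = (r + 1) * n + t / (r + 1) * (r + 1) := by ring
      have h3 : (r + 1) * n = r * n + n := by ring
      rw [Finset.card_univ, hV]
      omega
    obtain ⟨A, hAW, hAdisj, hAcard, hAadj⟩ :=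
      blueSets (redSub G c) n (t / (r + 1)) hn hno (r + 1) univ hcard
    obtain ⟨f, hfmem, hfadj⟩ := hspan A hAdisj hAcard
    have hinj : Function.Injective f := by
      intro i j hij
      by_contra hne
      apply Finset.disjoint_left.mp (hAdisj i j hne) (hfmem i)
      rw [hij]
      exact hfmem j
    refine ⟨⟨f, hinj⟩, ?_⟩
    intro i j hij
    simp only [Function.Embedding.coeFn_mk]
    refine ⟨hfadj i j hij, ?_⟩
    cases hc : c s(f i, f j) with
    | false => rfl
    | true =>
      exact absurd (show (redSub G c).Adj (f i) (f j) from ⟨hfadj i j hij, hc⟩)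
        (hAadj i j hij (f i) (hfmem i) (f j) (hfmem j))
end
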